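/- Let n be an odd positive integer and let X = (X_1, ..., X_n) be n independent bits, each equal to 0 with probability p > 1/2. Then for every permutation π of the set {0,1}^n of n-bit strings, the probability that the first bit of π(X) equals 0 is at most the probability that the majority value of X_1, ..., X_n equals 0. In particular the maximum over all permutations of the probability that the first bit of π(X) equals 0 is achieved by any permutation that maps exactly the strings with at least ⌈n/2⌉ zeros to strings whose first bit is 0. -/

import Mathlib

lemma half_card {α : Type*} [Fintype α] (σ : α → α) (hσ : Function.Involutive σ)
    (q : α → Prop) [DecidablePred q] (h : ∀ x, q (σ x) ↔ ¬ q x) :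
    2 * (Finset.univ.filter q).card = Fintype.card α := by
  have h1 : (Finset.univ.filter q).card =
      (Finset.univ.filter (fun x => ¬ q x)).card := by
    apply Finset.card_bij (fun x _ => σ x)
    · intro a ha
      simp only [Finset.mem_filter, Finset.mem_univ, true_and] at ha ⊢
      rw [h]; exact not_not_intro ha
    · intro a _ b _ hab; exact hσ.injective hab
    · intro b hb
      simp only [Finset.mem_filter, Finset.mem_univ, true_and] at hb ⊢
      exact ⟨σ b, by rw [h]; exact hb, hσ b⟩
  have h2 := Finset.card_filter_add_card_filter_not (s := Finset.univ) (p := q)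
  rw [Finset.card_univ] at h2
  omega

lemma pow_mono_bits (q r : ℝ) (hq : 0 ≤ q) (hqr : q ≤ r) (n a b : ℕ)
    (hab : a ≤ b) (hbn : b ≤ n) :
    r ^ a * q ^ (n - a) ≤ r ^ b * q ^ (n - b) := by
  have hr : 0 ≤ r := hq.trans hqr
  have hna : n - a = (b - a) + (n - b) := by omega
  calc r ^ a * q ^ (n - a) = r ^ a * (q ^ (b - a) * q ^ (n - b)) := by
        rw [hna, pow_add]
    _ ≤ r ^ a * (r ^ (b - a) * q ^ (n - b)) := by
        apply mul_le_mul_of_nonneg_left _ (pow_nonneg hr a)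
        exact mul_le_mul_of_nonneg_right (pow_le_pow_left₀ hq hqr _) (pow_nonneg hq _)
    _ = r ^ b * q ^ (n - b) := by
        rw [← mul_assoc, ← pow_add]
        congr 2
        omega

theorem stmt0 (n : ℕ) (hn : Odd n) (hpos : 0 < n) (p : ℝ) (hp : 1 / 2 < p) (hp1 : p ≤ 1)
    (P : (Fin n → Bool) → ℝ)
    (hP : ∀ x, P x = ∏ i, (if x i = false then p else 1 - p)) :
    (∀ π : Equiv.Perm (Fin n → Bool),
      ∑ x ∈ Finset.univ.filter (fun x : Fin n → Bool => (π x) ⟨0, hpos⟩ = false), P x ≤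
        ∑ x ∈ Finset.univ.filter
            (fun x : Fin n → Bool =>
              n < 2 * (Finset.univ.filter (fun i => x i = false)).card), P x) ∧
    (∀ π : Equiv.Perm (Fin n → Bool),
      (∀ x : Fin n → Bool,
          (π x) ⟨0, hpos⟩ = false ↔
            (n + 1) / 2 ≤ (Finset.univ.filter (fun i => x i = false)).card) →
      ∑ x ∈ Finset.univ.filter (fun x : Fin n → Bool => (π x) ⟨0, hpos⟩ = false), P x =
        ∑ x ∈ Finset.univ.filter
            (fun x : Fin n → Bool =>
              n < 2 * (Finset.univ.filter (fun i => x i = false)).card), P x) := by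
  obtain ⟨k, hk⟩ := hn
  set c : (Fin n → Bool) → ℕ :=
    fun x => (Finset.univ.filter (fun i => x i = false)).card with hc
  have hcn : ∀ x, c x ≤ n := by
    intro x
    have := Finset.card_filter_le (Finset.univ : Finset (Fin n)) (fun i => x i = false)
    simpa using this
  have hPx : ∀ x, P x = p ^ (c x) * (1 - p) ^ (n - c x) := by
    intro x
    rw [hP]
    rw [Finset.prod_ite (f := fun _ => p) (g := fun _ => 1 - p)]
    rw [Finset.prod_const, Finset.prod_const]
    have := Finset.card_filter_add_card_filter_not
      (s := (Finset.univ : Finset (Fin n))) (p := fun i => x i = false)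
    rw [Finset.card_univ, Fintype.card_fin] at this
    have h2 : (Finset.univ.filter (fun i => ¬ (x i = false))).card = n - c x := by
      simp only [hc]
      omega
    rw [h2]
  have h1p : (0:ℝ) ≤ 1 - p := by linarith
  have hle : (1:ℝ) - p ≤ p := by linarith
  set M : Finset (Fin n → Bool) :=
    Finset.univ.filter (fun x => n < 2 * c x) with hM
  -- cardinality of M
  have hcneg : ∀ x : Fin n → Bool, c (fun i => !(x i)) = n - c x := by
    intro x
    have := Finset.card_filter_add_card_filter_not
      (s := (Finset.univ : Finset (Fin n))) (p := fun i => x i = false)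
    rw [Finset.card_univ, Fintype.card_fin] at this
    have he : (Finset.univ.filter (fun i => (!(x i)) = false)) =
        (Finset.univ.filter (fun i => ¬ (x i = false))) := by
      apply Finset.filter_congr
      intro i _
      simp
    simp only [hc, he]
    omega
  have hMcard : 2 * M.card = Fintype.card (Fin n → Bool) := by
    apply half_card (fun x i => !(x i))
    · intro x; funext i; simp
    · intro x
      rw [hcneg]
      have := hcn x
      omega
  have hmain : ∀ π : Equiv.Perm (Fin n → Bool),
      ∑ x ∈ Finset.univ.filter (fun x : Fin n → Bool => (π x) ⟨0, hpos⟩ = false), P x ≤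
        ∑ x ∈ M, P x := by
    intro π
    set S : Finset (Fin n → Bool) :=
      Finset.univ.filter (fun x : Fin n → Bool => (π x) ⟨0, hpos⟩ = false) with hS
    have hScard : 2 * S.card = Fintype.card (Fin n → Bool) := by
      apply half_card
        (fun x => π.symm (Function.update (π x) ⟨0, hpos⟩ (!(π x ⟨0, hpos⟩))))
      · intro x
        simp only [Equiv.apply_symm_apply, Function.update_self, Function.update_idem,
          Bool.not_not, Function.update_eq_self, Equiv.symm_apply_apply]
      · intro x
        simp only [Equiv.apply_symm_apply, Function.update_self]
        cases h : π x ⟨0, hpos⟩ <;> simp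
    have hSM : S.card = M.card := by omega
    set t : ℝ := p ^ ((n + 1) / 2) * (1 - p) ^ (n - (n + 1) / 2) with ht
    have hMt : ∀ x ∈ M, t ≤ P x := by
      intro x hx
      rw [hM, Finset.mem_filter] at hx
      rw [hPx]
      exact pow_mono_bits _ _ h1p hle n _ _ (by omega) (hcn x)
    have hMt' : ∀ x ∉ M, P x ≤ t := by
      intro x hx
      rw [hM, Finset.mem_filter] at hx
      push_neg at hx
      have := hx (Finset.mem_univ x)
      rw [hPx]
      exact pow_mono_bits _ _ h1p hle n _ _ (by omega) (by omega)
    rw [← Finset.sum_inter_add_sum_sdiff S M P, ← Finset.sum_inter_add_sum_sdiff M S P,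
      Finset.inter_comm M S]
    apply add_le_add_right
    have hcard' : (S \ M).card = (M \ S).card := by
      have h1 := Finset.card_sdiff_add_card_inter S M
      have h2 := Finset.card_sdiff_add_card_inter M S
      rw [Finset.inter_comm] at h2
      omega
    calc ∑ x ∈ S \ M, P x ≤ (S \ M).card • t :=
          Finset.sum_le_card_nsmul _ _ _
            (fun x hx => hMt' x (Finset.mem_sdiff.mp hx).2)
      _ = (M \ S).card • t := by rw [hcard']
      _ ≤ ∑ x ∈ M \ S, P x :=
          Finset.card_nsmul_le_sum _ _ _
            (fun x hx => hMt x (Finset.mem_sdiff.mp hx).1)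
  refine ⟨hmain, ?_⟩
  intro π hπ
  congr 1
  apply Finset.filter_congr
  intro x _
  rw [hπ]
  simp only [hc]
  constructor <;> intro <;> omega
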